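/- Let a finite group G act on finite sets X, Y with μ₁, μ₂ G-invariant fully supported probability measures, m₁ = |X/G|, n₁ = |Y/G|, m₁₂ = |(X×Y)/G|. Then the number of extreme points of K(μ₁,μ₂) is at most C(m₁₂, m₁+n₁-1). -/

import Mathlib

open Finset

set_option linter.unusedSectionVars false
set_option maxHeartbeats 1000000

def Kset (G : Type*) {X Y : Type*} [Group G] [MulAction G X] [MulAction G Y]
    [Fintype X] [Fintype Y] (μ₁ : X → ℝ) (μ₂ : Y → ℝ) : Set (X × Y → ℝ) :=
  {w | (∀ p, 0 ≤ w p) ∧ (∀ (g : G) (p : X × Y), w (g • p) = w p) ∧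
       (∀ x, ∑ y, w (x, y) = μ₁ x) ∧ (∀ y, ∑ x, w (x, y) = μ₂ y)}

namespace Stmt16Aux

variable {G X Y : Type*} [Group G] [Finite G] [Fintype X] [Fintype Y]
  [MulAction G X] [MulAction G Y]

open Classical in
/-- Indicator of an orbit. -/
noncomputable def eorb {Z : Type*} [MulAction G Z] (q : Quotient (MulAction.orbitRel G Z)) :
    Z → ℝ :=
  fun p => if Quotient.mk (MulAction.orbitRel G Z) p = q then 1 else 0

/-- Invariance of a function. -/
def isInv (G : Type*) {Z : Type*} [Group G] [MulAction G Z] (w : Z → ℝ) : Prop :=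
  ∀ (g : G) (z : Z), w (g • z) = w z

lemma quot_smul {Z : Type*} [MulAction G Z] (g : G) (z : Z) :
    Quotient.mk (MulAction.orbitRel G Z) (g • z) = Quotient.mk _ z :=
  Quotient.sound (MulAction.mem_orbit z g)

lemma isInv.congr {Z : Type*} [MulAction G Z] {w : Z → ℝ} (hw : isInv G w) {z z' : Z}
    (h : Quotient.mk (MulAction.orbitRel G Z) z = Quotient.mk _ z') : w z = w z' := by
  obtain ⟨g, hg⟩ := Quotient.exact h
  rw [← hg]; exact (hw g z').symm ▸ (hw g z')

lemma eorb_isInv {Z : Type*} [MulAction G Z] (q : Quotient (MulAction.orbitRel G Z)) :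
    isInv G (eorb (G := G) q) := by
  intro g z
  unfold eorb
  rw [quot_smul]

open Classical in
lemma eorb_apply_out {Z : Type*} [MulAction G Z] [Fintype Z]
    (q q' : Quotient (MulAction.orbitRel G Z)) :
    eorb (G := G) q (Quotient.out q') = if q' = q then (1:ℝ) else 0 := by
  unfold eorb
  rw [Quotient.out_eq]

lemma inv_eq_sum {Z : Type*} [MulAction G Z] [Fintype Z]
    [Fintype (Quotient (MulAction.orbitRel G Z))] {w : Z → ℝ} (hw : isInv G w) :
    ∑ q : Quotient (MulAction.orbitRel G Z), w (Quotient.out q) • eorb (G := G) q = w := by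
  funext z
  classical
  have : ∀ q, (w (Quotient.out q) • eorb (G := G) q) z
      = if Quotient.mk (MulAction.orbitRel G Z) z = q then w (Quotient.out q) else 0 := by
    intro q; simp [eorb, Pi.smul_apply]
  simp only [Finset.sum_apply, this, Finset.sum_ite_eq, Finset.mem_univ, if_true]
  exact hw.congr (by rw [Quotient.out_eq])



variable {G X Y : Type*} [Group G] [Finite G] [Fintype X] [Fintype Y]
  [MulAction G X] [MulAction G Y]

/-- The marginals map. -/
noncomputable def Amap (X Y : Type*) [Fintype X] [Fintype Y] :
    ((X × Y) → ℝ) →ₗ[ℝ] (X → ℝ) × (Y → ℝ) where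
  toFun w := (fun x => ∑ y, w (x, y), fun y => ∑ x, w (x, y))
  map_add' u v := by
    refine Prod.ext (funext fun x => ?_) (funext fun y => ?_) <;>
      simp [Finset.sum_add_distrib]
  map_smul' c u := by
    refine Prod.ext (funext fun x => ?_) (funext fun y => ?_) <;>
      simp [Finset.mul_sum]

noncomputable def Bcol (G : Type*) {X Y : Type*} [Group G] [Finite G] [Fintype X] [Fintype Y]
    [MulAction G X] [MulAction G Y] (q : Quotient (MulAction.orbitRel G (X × Y))) :
    (X → ℝ) × (Y → ℝ) :=
  Amap X Y (eorb (G := G) q)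

lemma mem_Kset_iff (μ₁ : X → ℝ) (μ₂ : Y → ℝ) (w : X × Y → ℝ) :
    w ∈ Kset G μ₁ μ₂ ↔
      (∀ p, 0 ≤ w p) ∧ isInv G w ∧ Amap X Y w = (μ₁, μ₂) := by
  simp only [Kset, Set.mem_setOf_eq, Amap, LinearMap.coe_mk, AddHom.coe_mk, Prod.mk.injEq,
    funext_iff, isInv]

/-- The target subspace. -/
def Usub (G X Y : Type*) [Group G] [Fintype X] [Fintype Y] [MulAction G X] [MulAction G Y] :
    Submodule ℝ ((X → ℝ) × (Y → ℝ)) where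
  carrier := {ab | isInv G ab.1 ∧ isInv G ab.2 ∧ ∑ x, ab.1 x = ∑ y, ab.2 y}
  add_mem' := by
    rintro ⟨a, b⟩ ⟨a', b'⟩ ⟨ha, hb, hs⟩ ⟨ha', hb', hs'⟩
    have ha : ∀ (g : G) x, a (g • x) = a x := ha
    have hb : ∀ (g : G) y, b (g • y) = b y := hb
    have ha' : ∀ (g : G) x, a' (g • x) = a' x := ha'
    have hb' : ∀ (g : G) y, b' (g • y) = b' y := hb'
    have hs : ∑ x, a x = ∑ y, b y := hs
    have hs' : ∑ x, a' x = ∑ y, b' y := hs'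
    refine ⟨fun g x => ?_, fun g y => ?_, ?_⟩
    · show a (g • x) + a' (g • x) = a x + a' x
      rw [ha g x, ha' g x]
    · show b (g • y) + b' (g • y) = b y + b' y
      rw [hb g y, hb' g y]
    · show ∑ x, (a x + a' x) = ∑ y, (b y + b' y)
      rw [Finset.sum_add_distrib, Finset.sum_add_distrib, hs, hs']
  zero_mem' := ⟨fun _ _ => rfl, fun _ _ => rfl, by simp⟩
  smul_mem' := by
    rintro c ⟨a, b⟩ ⟨ha, hb, hs⟩
    have ha : ∀ (g : G) x, a (g • x) = a x := ha
    have hb : ∀ (g : G) y, b (g • y) = b y := hb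
    have hs : ∑ x, a x = ∑ y, b y := hs
    refine ⟨fun g x => ?_, fun g y => ?_, ?_⟩
    · show c * a (g • x) = c * a x
      rw [ha g x]
    · show c * b (g • y) = c * b y
      rw [hb g y]
    · show ∑ x, c * a x = ∑ y, c * b y
      rw [← Finset.mul_sum, ← Finset.mul_sum, hs]

lemma Bcol_mem_Usub (q : Quotient (MulAction.orbitRel G (X × Y))) :
    Bcol G (X := X) (Y := Y) q ∈ Usub G X Y := by
  refine ⟨fun g x => ?_, fun g y => ?_, ?_⟩
  · show ∑ y, eorb (G := G) q (g • x, y) = ∑ y, eorb (G := G) q (x, y)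
    exact (Fintype.sum_equiv (MulAction.toPerm g) (fun y => eorb (G := G) q (x, y))
      (fun y => eorb (G := G) q (g • x, y))
      (fun y => (eorb_isInv q g (x, y)).symm)).symm
  · show ∑ x, eorb (G := G) q (x, g • y) = ∑ x, eorb (G := G) q (x, y)
    exact (Fintype.sum_equiv (MulAction.toPerm g) (fun x => eorb (G := G) q (x, y))
      (fun x => eorb (G := G) q (x, g • y))
      (fun x => (eorb_isInv q g (x, y)).symm)).symm
  · exact Finset.sum_comm


lemma Amap_eq_sum [Fintype (Quotient (MulAction.orbitRel G (X × Y)))]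
    {w : X × Y → ℝ} (hw : isInv G w) :
    Amap X Y w = ∑ q, w (Quotient.out q) • Bcol G q := by
  conv_lhs => rw [← inv_eq_sum hw]
  rw [map_sum]
  simp only [map_smul, Bcol]

lemma Amap_mem_span {w : X × Y → ℝ} (hw : isInv G w) :
    Amap X Y w ∈ Submodule.span ℝ (Set.range (Bcol G (X := X) (Y := Y))) := by
  haveI : Fintype (Quotient (MulAction.orbitRel G (X × Y))) := Fintype.ofFinite _
  rw [Amap_eq_sum hw]
  exact Submodule.sum_mem _ fun q _ =>
    Submodule.smul_mem _ _ (Submodule.subset_span (Set.mem_range_self q))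

lemma rank1_mem {a : X → ℝ} {b : Y → ℝ} (ha : isInv G a) (hb : isInv G b) {σ : ℝ}
    (hsa : ∑ x, a x = σ) (hsb : ∑ y, b y = σ) (hσ : σ ≠ 0) :
    (a, b) ∈ Submodule.span ℝ (Set.range (Bcol G (X := X) (Y := Y))) := by
  set w : X × Y → ℝ := fun p => a p.1 * b p.2 / σ with hwdef
  have hw : isInv G w := by
    intro g p
    show a (g • p).1 * b (g • p).2 / σ = a p.1 * b p.2 / σ
    rw [show (g • p).1 = g • p.1 from rfl, show (g • p).2 = g • p.2 from rfl, ha, hb]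
  have hAw : Amap X Y w = (a, b) := by
    refine Prod.ext (funext fun x => ?_) (funext fun y => ?_)
    · show ∑ y, a x * b y / σ = a x
      rw [← Finset.sum_div, ← Finset.mul_sum, hsb, mul_div_cancel_right₀ _ hσ]
    · show ∑ x, a x * b y / σ = b y
      rw [← Finset.sum_div, ← Finset.sum_mul, hsa, mul_div_cancel_left₀ _ hσ]
  rw [← hAw]
  exact Amap_mem_span hw

lemma span_Bcol [Nonempty X] [Nonempty Y] :
    Submodule.span ℝ (Set.range (Bcol G (X := X) (Y := Y))) = Usub G X Y := by
  apply le_antisymm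
  · rw [Submodule.span_le]
    rintro _ ⟨q, rfl⟩
    exact Bcol_mem_Usub q
  · rintro ⟨a, b⟩ ⟨ha, hb, hs⟩
    have ha : isInv G a := ha
    have hb : isInv G b := hb
    have hs : ∑ x, a x = ∑ y, b y := hs
    by_cases hσ : ∑ x, a x = 0
    · set a₀ : X → ℝ := fun _ => 1 / (Fintype.card X : ℝ) with ha₀def
      set b₀ : Y → ℝ := fun _ => 1 / (Fintype.card Y : ℝ) with hb₀def
      have hcX : (Fintype.card X : ℝ) ≠ 0 := Nat.cast_ne_zero.mpr Fintype.card_ne_zero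
      have hcY : (Fintype.card Y : ℝ) ≠ 0 := Nat.cast_ne_zero.mpr Fintype.card_ne_zero
      have hsa₀ : ∑ _x : X, (1 / (Fintype.card X : ℝ)) = 1 := by
        rw [Finset.sum_const, Finset.card_univ, nsmul_eq_mul, mul_one_div, div_self hcX]
      have hsb₀ : ∑ _y : Y, (1 / (Fintype.card Y : ℝ)) = 1 := by
        rw [Finset.sum_const, Finset.card_univ, nsmul_eq_mul, mul_one_div, div_self hcY]
      have ha₀ : isInv G a₀ := fun _ _ => rfl
      have hb₀ : isInv G b₀ := fun _ _ => rfl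
      have mem0 : (a₀, b₀) ∈ Submodule.span ℝ (Set.range (Bcol G (X := X) (Y := Y))) :=
        rank1_mem ha₀ hb₀ hsa₀ hsb₀ one_ne_zero
      have mem1 : (a + a₀, b + b₀) ∈ Submodule.span ℝ (Set.range (Bcol G (X := X) (Y := Y))) := by
        refine rank1_mem (fun g x => ?_) (fun g y => ?_) (σ := 1) ?_ ?_ one_ne_zero
        · show a (g • x) + a₀ (g • x) = a x + a₀ x
          rw [ha g x]
        · show b (g • y) + b₀ (g • y) = b y + b₀ y
          rw [hb g y]
        · show ∑ x, (a x + a₀ x) = 1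
          rw [Finset.sum_add_distrib, hσ, hsa₀, zero_add]
        · show ∑ y, (b y + b₀ y) = 1
          rw [Finset.sum_add_distrib, ← hs, hσ, hsb₀, zero_add]
      have key : (a, b) = (a + a₀, b + b₀) - (a₀, b₀) := by
        refine Prod.ext ?_ ?_ <;> simp
      rw [key]
      exact sub_mem mem1 mem0
    · exact rank1_mem ha hb rfl hs.symm hσ


noncomputable def psi (G X Y : Type*) [Group G] [Fintype X] [Fintype Y]
    [MulAction G X] [MulAction G Y] :
    ((Quotient (MulAction.orbitRel G X) → ℝ) × (Quotient (MulAction.orbitRel G Y) → ℝ))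
      →ₗ[ℝ] ℝ where
  toFun fg := ∑ x : X, fg.1 (Quotient.mk _ x) - ∑ y : Y, fg.2 (Quotient.mk _ y)
  map_add' u v := by
    show (∑ x : X, (u.1 (Quotient.mk _ x) + v.1 (Quotient.mk _ x)))
        - ∑ y : Y, (u.2 (Quotient.mk _ y) + v.2 (Quotient.mk _ y)) = _
    rw [Finset.sum_add_distrib, Finset.sum_add_distrib]
    ring
  map_smul' c u := by
    show (∑ x : X, c * u.1 (Quotient.mk _ x)) - ∑ y : Y, c * u.2 (Quotient.mk _ y) = _
    rw [← Finset.mul_sum, ← Finset.mul_sum]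
    show _ = c * _
    ring

noncomputable def UsubEquiv (G X Y : Type*) [Group G] [Finite G] [Fintype X] [Fintype Y]
    [MulAction G X] [MulAction G Y] :
    Usub G X Y ≃ₗ[ℝ] LinearMap.ker (psi G X Y) where
  toFun ab := ⟨((fun qx => ab.1.1 (Quotient.out qx)), (fun qy => ab.1.2 (Quotient.out qy))), by
    obtain ⟨⟨a, b⟩, ha, hb, hs⟩ := ab
    have ha : isInv G a := ha
    have hb : isInv G b := hb
    have hs : ∑ x, a x = ∑ y, b y := hs
    simp only [LinearMap.mem_ker, psi, LinearMap.coe_mk, AddHom.coe_mk]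
    have h1 : ∀ x : X, a (Quotient.out (Quotient.mk (MulAction.orbitRel G X) x)) = a x :=
      fun x => ha.congr (Quotient.out_eq _)
    have h2 : ∀ y : Y, b (Quotient.out (Quotient.mk (MulAction.orbitRel G Y) y)) = b y :=
      fun y => hb.congr (Quotient.out_eq _)
    rw [Finset.sum_congr rfl fun x _ => h1 x, Finset.sum_congr rfl fun y _ => h2 y, hs, sub_self]⟩
  invFun fg := ⟨((fun x => fg.1.1 (Quotient.mk _ x)), (fun y => fg.1.2 (Quotient.mk _ y))), by
    obtain ⟨⟨f, g0⟩, hker⟩ := fg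
    simp only [LinearMap.mem_ker, psi, LinearMap.coe_mk, AddHom.coe_mk] at hker
    exact ⟨fun g x => congrArg f (quot_smul g x), fun g y => congrArg g0 (quot_smul g y),
      sub_eq_zero.mp hker⟩⟩
  map_add' _ _ := rfl
  map_smul' _ _ := rfl
  left_inv ab := by
    obtain ⟨⟨a, b⟩, ha, hb, hs⟩ := ab
    have ha : isInv G a := ha
    have hb : isInv G b := hb
    exact Subtype.ext (Prod.ext (funext fun x => ha.congr (Quotient.out_eq _))
      (funext fun y => hb.congr (Quotient.out_eq _)))
  right_inv fg := by
    obtain ⟨⟨f, g0⟩, hker⟩ := fg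
    exact Subtype.ext (Prod.ext (funext fun qx => congrArg f (Quotient.out_eq qx))
      (funext fun qy => congrArg g0 (Quotient.out_eq qy)))

lemma finrank_Usub [Nonempty X] [Nonempty Y] :
    Module.finrank ℝ (Usub G X Y) =
      Nat.card (Quotient (MulAction.orbitRel G X)) +
        Nat.card (Quotient (MulAction.orbitRel G Y)) - 1 := by
  haveI : Fintype (Quotient (MulAction.orbitRel G X)) := Fintype.ofFinite _
  haveI : Fintype (Quotient (MulAction.orbitRel G Y)) := Fintype.ofFinite _
  rw [(UsubEquiv G X Y).finrank_eq]
  have hsurj : LinearMap.range (psi G X Y) = ⊤ := by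
    rw [LinearMap.range_eq_top]
    intro r
    refine ⟨((fun _ => r / (Fintype.card X : ℝ)), 0), ?_⟩
    have hcX : (Fintype.card X : ℝ) ≠ 0 := Nat.cast_ne_zero.mpr Fintype.card_ne_zero
    show (∑ _x : X, r / (Fintype.card X : ℝ)) - ∑ _y : Y, (0:ℝ) = r
    rw [Finset.sum_const, Finset.card_univ, nsmul_eq_mul, Finset.sum_const, smul_zero, sub_zero,
      mul_div_cancel₀ _ hcX]
  have hrn := LinearMap.finrank_range_add_finrank_ker (psi G X Y)
  rw [hsurj, finrank_top, Module.finrank_self] at hrn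
  have hdim : Module.finrank ℝ
      ((Quotient (MulAction.orbitRel G X) → ℝ) × (Quotient (MulAction.orbitRel G Y) → ℝ)) =
      Fintype.card (Quotient (MulAction.orbitRel G X)) +
        Fintype.card (Quotient (MulAction.orbitRel G Y)) := by
    rw [Module.finrank_prod, Module.finrank_fintype_fun_eq_card, Module.finrank_fintype_fun_eq_card]
  rw [hdim] at hrn
  rw [Nat.card_eq_fintype_card, Nat.card_eq_fintype_card]
  omega


lemma sum_subtype_eq {ι M : Type*} [Fintype ι] [AddCommMonoid M] (S : Set ι) [Fintype S]
    (f : ι → M) (hf : ∀ q ∉ S, f q = 0) : ∑ q : S, f q.1 = ∑ q : ι, f q := by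
  classical
  rw [Finset.sum_set_coe]
  exact Finset.sum_subset (Finset.subset_univ _) (fun q _ hq => hf q (by simpa using hq))

lemma sum_smul_eorb_apply [Fintype (Quotient (MulAction.orbitRel G (X × Y)))]
    (cc : Quotient (MulAction.orbitRel G (X × Y)) → ℝ) (p : X × Y) :
    (∑ q, cc q • eorb (G := G) q) p = cc (Quotient.mk _ p) := by
  classical
  rw [Finset.sum_apply]
  have h : ∀ q, (cc q • eorb (G := G) q) p
      = if Quotient.mk (MulAction.orbitRel G (X × Y)) p = q then cc q else 0 := by
    intro q
    simp [eorb, Pi.smul_apply, mul_ite]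
  simp only [h, Finset.sum_ite_eq, Finset.mem_univ, if_true]

lemma eq_of_indep_support {w w' : X × Y → ℝ} (hw : isInv G w) (hw' : isInv G w')
    (hA : Amap X Y w = Amap X Y w') (T : Set (Quotient (MulAction.orbitRel G (X × Y))))
    (hT : LinearIndependent ℝ (fun q : T => Bcol G q.1))
    (hsw : ∀ q, w (Quotient.out q) ≠ 0 → q ∈ T)
    (hsw' : ∀ q, w' (Quotient.out q) ≠ 0 → q ∈ T) : w = w' := by
  haveI : Fintype (Quotient (MulAction.orbitRel G (X × Y))) := Fintype.ofFinite _
  haveI : Fintype T := Fintype.ofFinite _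
  classical
  set d : Quotient (MulAction.orbitRel G (X × Y)) → ℝ :=
    fun q => w (Quotient.out q) - w' (Quotient.out q) with hd
  have hdT : ∀ q ∉ T, d q = 0 := by
    intro q hq
    by_cases h1 : w (Quotient.out q) = 0
    · by_cases h2 : w' (Quotient.out q) = 0
      · simp [hd, h1, h2]
      · exact absurd (hsw' q h2) hq
    · exact absurd (hsw q h1) hq
  have hsum : ∑ q : T, d q.1 • Bcol G q.1 = 0 := by
    have h1 : ∑ q : T, d q.1 • Bcol G q.1
        = ∑ q, d q • Bcol G q :=
      sum_subtype_eq T (fun q => d q • Bcol G q) (fun q hq => by show d q • Bcol G q = 0; rw [hdT q hq, zero_smul])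
    have h2 : ∑ q, d q • Bcol G q = Amap X Y w - Amap X Y w' := by
      rw [Amap_eq_sum hw, Amap_eq_sum hw', ← Finset.sum_sub_distrib]
      exact Finset.sum_congr rfl fun q _ => sub_smul _ _ _
    rw [h1, h2, hA, sub_self]
  have hzero : ∀ i : T, d i.1 = 0 := Fintype.linearIndependent_iff.mp hT (fun q => d q.1) hsum
  have hall : ∀ q : Quotient (MulAction.orbitRel G (X × Y)),
      w (Quotient.out q) = w' (Quotient.out q) := by
    intro q
    by_cases hq : q ∈ T
    · have := hzero ⟨q, hq⟩
      simpa [hd, sub_eq_zero] using this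
    · have := hdT q hq
      simpa [hd, sub_eq_zero] using this
  rw [← inv_eq_sum hw, ← inv_eq_sum hw']
  exact Finset.sum_congr rfl fun q _ => by rw [hall q]

lemma extreme_indep [Nonempty X] [Nonempty Y] {μ₁ : X → ℝ} {μ₂ : Y → ℝ} {w : X × Y → ℝ}
    (hw : w ∈ Set.extremePoints ℝ (Kset G μ₁ μ₂)) :
    LinearIndependent ℝ
      (fun q : {q : Quotient (MulAction.orbitRel G (X × Y)) | w (Quotient.out q) ≠ 0} =>
        Bcol G q.1) := by
  haveI : Fintype (Quotient (MulAction.orbitRel G (X × Y))) := Fintype.ofFinite _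
  classical
  obtain ⟨hwK, hext⟩ := mem_extremePoints.mp hw
  obtain ⟨hpos, hinv, hmarg⟩ := (mem_Kset_iff μ₁ μ₂ w).mp hwK
  set S : Set (Quotient (MulAction.orbitRel G (X × Y))) :=
    {q | w (Quotient.out q) ≠ 0} with hSdef
  by_contra hdep
  obtain ⟨c, hc0, i0, hi0⟩ := Fintype.not_linearIndependent_iff.mp hdep
  set cc : Quotient (MulAction.orbitRel G (X × Y)) → ℝ :=
    fun q => if h : q ∈ S then c ⟨q, h⟩ else 0 with hccdef
  set u : X × Y → ℝ := ∑ q, cc q • eorb (G := G) q with hudef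
  have hu_apply : ∀ p, u p = cc (Quotient.mk _ p) := fun p => sum_smul_eorb_apply cc p
  have huinv : isInv G u := by
    intro g p
    rw [hu_apply, hu_apply, quot_smul]
  have hAu : Amap X Y u = 0 := by
    rw [hudef, map_sum]
    simp only [map_smul]
    show ∑ q, cc q • Bcol G q = 0
    have h1 : ∑ q : S, cc q.1 • Bcol G q.1 = ∑ q, cc q • Bcol G q :=
      sum_subtype_eq S (fun q => cc q • Bcol G q)
        (fun q hq => by show cc q • Bcol G q = 0; rw [hccdef]; simp [hq])
    rw [← h1]
    have h2 : ∀ q : S, cc q.1 • Bcol G q.1 = c q • Bcol G q.1 := by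
      intro q
      rw [hccdef]
      simp [q.2]
    rw [Finset.sum_congr rfl fun q _ => h2 q]
    exact hc0
  have hu_ne : u (Quotient.out i0.1) ≠ 0 := by
    rw [hu_apply, Quotient.out_eq]
    have : cc i0.1 = c i0 := by rw [hccdef]; simp [i0.2]
    rw [this]
    exact hi0
  have hwS : ∀ p, u p ≠ 0 → 0 < w p := by
    intro p hup
    rcases lt_or_eq_of_le (hpos p) with h | h
    · exact h
    · exfalso
      apply hup
      rw [hu_apply]
      have hmem : Quotient.mk (MulAction.orbitRel G (X × Y)) p ∉ S := by
        simp only [hSdef, Set.mem_setOf_eq, not_not]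
        rw [hinv.congr (Quotient.out_eq _), ← h]
      rw [hccdef]
      simp [hmem]
  haveI : Nonempty (X × Y) := inferInstance
  set ε : ℝ := Finset.univ.inf' Finset.univ_nonempty
    (fun p : X × Y => if u p = 0 then 1 else w p / |u p|) with hεdef
  have hεpos : 0 < ε := by
    rw [hεdef, Finset.lt_inf'_iff]
    intro p _
    by_cases hup : u p = 0
    · simp [hup]
    · simp only [hup, if_false]
      exact div_pos (hwS p hup) (abs_pos.mpr hup)
  have hbound : ∀ p, ε * |u p| ≤ w p := by
    intro p
    by_cases hup : u p = 0
    · simp [hup]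
      exact hpos p
    · have h1 : ε ≤ w p / |u p| := by
        rw [hεdef]
        have := Finset.inf'_le (b := p)
          (fun p : X × Y => if u p = 0 then 1 else w p / |u p|) (Finset.mem_univ p)
        simpa only [hup, if_false, ↓reduceIte] using this
      exact (le_div_iff₀ (abs_pos.mpr hup)).mp h1
  set w₁ : X × Y → ℝ := w + ε • u with hw₁
  set w₂ : X × Y → ℝ := w - ε • u with hw₂
  have habs : ∀ p, |ε * u p| ≤ w p := by
    intro p
    rw [abs_mul, abs_of_pos hεpos]
    exact hbound p
  have hw₁K : w₁ ∈ Kset G μ₁ μ₂ := by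
    refine (mem_Kset_iff μ₁ μ₂ w₁).mpr ⟨?_, ?_, ?_⟩
    · intro p
      have h1 := habs p
      have h2 := neg_abs_le (ε * u p)
      show 0 ≤ w p + ε * u p
      linarith
    · intro g p
      show w (g • p) + ε * u (g • p) = w p + ε * u p
      rw [hinv g p, huinv g p]
    · rw [hw₁, map_add, map_smul, hAu, smul_zero, add_zero, hmarg]
  have hw₂K : w₂ ∈ Kset G μ₁ μ₂ := by
    refine (mem_Kset_iff μ₁ μ₂ w₂).mpr ⟨?_, ?_, ?_⟩
    · intro p
      have h1 := habs p
      have h2 := le_abs_self (ε * u p)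
      show 0 ≤ w p - ε * u p
      linarith
    · intro g p
      show w (g • p) - ε * u (g • p) = w p - ε * u p
      rw [hinv g p, huinv g p]
    · rw [hw₂, map_sub, map_smul, hAu, smul_zero, sub_zero, hmarg]
  have hmid : w ∈ openSegment ℝ w₁ w₂ := by
    refine ⟨1/2, 1/2, by norm_num, by norm_num, by norm_num, ?_⟩
    funext p
    show (1/2 : ℝ) * (w p + ε * u p) + (1/2 : ℝ) * (w p - ε * u p) = w p
    ring
  have heq := hext w₁ hw₁K w₂ hw₂K hmid
  have : w₁ = w₂ := heq.1.trans heq.2.symm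
  have := congrFun this (Quotient.out i0.1)
  have h3 : ε * u (Quotient.out i0.1) = 0 := by
    have h4 : w (Quotient.out i0.1) + ε * u (Quotient.out i0.1)
        = w (Quotient.out i0.1) - ε * u (Quotient.out i0.1) := this
    linarith
  exact hu_ne (by
    rcases mul_eq_zero.mp h3 with h | h
    · exact absurd h (ne_of_gt hεpos)
    · exact h)


lemma exists_T [Nonempty X] [Nonempty Y] {μ₁ : X → ℝ} {μ₂ : Y → ℝ} {w : X × Y → ℝ}
    (hw : w ∈ Set.extremePoints ℝ (Kset G μ₁ μ₂)) :
    ∃ T : Set (Quotient (MulAction.orbitRel G (X × Y))),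
      (∀ q, w (Quotient.out q) ≠ 0 → q ∈ T) ∧
      LinearIndependent ℝ (fun q : T => Bcol G q.1) ∧
      T.ncard = Nat.card (Quotient (MulAction.orbitRel G X)) +
        Nat.card (Quotient (MulAction.orbitRel G Y)) - 1 := by
  classical
  haveI : Fintype (Quotient (MulAction.orbitRel G (X × Y))) := Fintype.ofFinite _
  set S : Set (Quotient (MulAction.orbitRel G (X × Y))) :=
    {q | w (Quotient.out q) ≠ 0} with hSdef
  have hS : LinearIndependent ℝ (fun q : S => Bcol G q.1) := extreme_indep hw
  have hSinj : Function.Injective (fun q : S => Bcol G q.1) := hS.injective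
  set s : Set ((X → ℝ) × (Y → ℝ)) := Set.range (fun q : S => Bcol G q.1) with hsdef
  have hs_ind : LinearIndependent ℝ ((↑) : s → ((X → ℝ) × (Y → ℝ))) := (linearIndepOn_id_range_iff hSinj).mpr hS
  have hst : s ⊆ Set.range (Bcol G (X := X) (Y := Y)) := by
    rintro _ ⟨q, rfl⟩
    exact ⟨q.1, rfl⟩
  obtain ⟨b, hbt, hsb, htb, hbind⟩ := exists_linearIndepOn_id_extension hs_ind hst
  have hbfin : b.Finite := (Set.finite_range (Bcol G)).subset hbt
  haveI : Fintype b := hbfin.fintype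
  have hspan : Submodule.span ℝ b = Usub G X Y := by
    apply le_antisymm
    · rw [← span_Bcol (G := G)]
      exact Submodule.span_mono hbt
    · rw [← span_Bcol (G := G)]
      exact Submodule.span_le.mpr htb
  have hcardb : b.toFinset.card = Nat.card (Quotient (MulAction.orbitRel G X)) +
      Nat.card (Quotient (MulAction.orbitRel G Y)) - 1 := by
    have h := finrank_span_set_eq_card hbind
    rw [hspan, finrank_Usub] at h
    exact h.symm
  have hpre : ∀ v ∈ b, ∃ q, Bcol G (X := X) (Y := Y) q = v := fun v hv => hbt hv
  set F : ((X → ℝ) × (Y → ℝ)) → Quotient (MulAction.orbitRel G (X × Y)) :=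
    fun v => if h : ∃ q, Bcol G (X := X) (Y := Y) q = v then h.choose
      else Quotient.mk _ (Classical.arbitrary _) with hFdef
  have hF : ∀ v ∈ b, Bcol G (F v) = v := by
    intro v hv
    have h := hpre v hv
    rw [hFdef]
    simp only [h, dif_pos]
    exact h.choose_spec
  set T : Set (Quotient (MulAction.orbitRel G (X × Y))) := S ∪ F '' (b \ s) with hTdef
  have hTb : ∀ q ∈ T, Bcol G q ∈ b := by
    rintro q (hq | ⟨v, hv, rfl⟩)
    · exact hsb ⟨⟨q, hq⟩, rfl⟩
    · rw [hF v hv.1]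
      exact hv.1
  have hTinj : Set.InjOn (Bcol G) T := by
    rintro q₁ (hq₁ | ⟨v₁, hv₁, rfl⟩) q₂ (hq₂ | ⟨v₂, hv₂, rfl⟩) heq
    · exact congrArg Subtype.val (hSinj (a₁ := ⟨q₁, hq₁⟩) (a₂ := ⟨q₂, hq₂⟩) heq)
    · exfalso
      apply hv₂.2
      rw [← hF v₂ hv₂.1, ← heq]
      exact ⟨⟨q₁, hq₁⟩, rfl⟩
    · exfalso
      apply hv₁.2
      rw [← hF v₁ hv₁.1, heq]
      exact ⟨⟨q₂, hq₂⟩, rfl⟩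
    · have : v₁ = v₂ := by rw [← hF v₁ hv₁.1, ← hF v₂ hv₂.1, heq]
      rw [this]
  have hTsurj : b ⊆ Bcol G '' T := by
    intro v hv
    by_cases hvs : v ∈ s
    · obtain ⟨q, hq⟩ := hvs
      exact ⟨q.1, Or.inl q.2, hq⟩
    · exact ⟨F v, Or.inr ⟨v, ⟨hv, hvs⟩, rfl⟩, hF v hv⟩
  have hT_ind : LinearIndependent ℝ (fun q : T => Bcol G q.1) := by
    have hembinj : Function.Injective
        (fun q : T => (⟨Bcol G q.1, hTb q.1 q.2⟩ : b)) := by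
      intro q₁ q₂ h
      exact Subtype.ext (hTinj q₁.2 q₂.2 (congrArg Subtype.val h))
    exact hbind.comp _ hembinj
  have hTcard : T.ncard = b.toFinset.card := by
    have himg : Bcol G '' T = b := Set.Subset.antisymm
      (by rintro _ ⟨q, hq, rfl⟩; exact hTb q hq) hTsurj
    rw [← Set.ncard_image_of_injOn hTinj, himg, Set.ncard_eq_toFinset_card']
  exact ⟨T, fun q hq => Or.inl hq, hT_ind, by rw [hTcard, hcardb]⟩

theorem main {G X Y : Type*} [Group G] [Finite G] [Fintype X] [Fintype Y]
    [MulAction G X] [MulAction G Y] [Nonempty X] [Nonempty Y]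
    (μ₁ : X → ℝ) (μ₂ : Y → ℝ) :
    (Set.extremePoints ℝ (Kset G μ₁ μ₂)).ncard ≤
      (Nat.card (Quotient (MulAction.orbitRel G (X × Y)))).choose
        (Nat.card (Quotient (MulAction.orbitRel G X)) +
          Nat.card (Quotient (MulAction.orbitRel G Y)) - 1) := by
  classical
  haveI : Fintype (Quotient (MulAction.orbitRel G (X × Y))) := Fintype.ofFinite _
  set k := Nat.card (Quotient (MulAction.orbitRel G X)) +
    Nat.card (Quotient (MulAction.orbitRel G Y)) - 1 with hkdef
  set E := Set.extremePoints ℝ (Kset G μ₁ μ₂) with hEdef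
  have hchoice : ∀ w : E, ∃ T : Set (Quotient (MulAction.orbitRel G (X × Y))),
      (∀ q, (w : X × Y → ℝ) (Quotient.out q) ≠ 0 → q ∈ T) ∧
      LinearIndependent ℝ (fun q : T => Bcol G q.1) ∧ T.ncard = k :=
    fun w => exists_T w.2
  choose T hT1 hT2 hT3 using hchoice
  set f : E → {t : Finset (Quotient (MulAction.orbitRel G (X × Y))) // t.card = k} :=
    fun w => ⟨(Set.toFinite (T w)).toFinset, by
      rw [← Set.ncard_eq_toFinset_card (T w) (Set.toFinite (T w))]
      exact hT3 w⟩ with hfdef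
  have hinj : Function.Injective f := by
    intro w w' hff
    have hTT : T w = T w' := by
      have h1 := congrArg Subtype.val hff
      exact Set.Finite.toFinset_inj.mp h1
    obtain ⟨hpos, hinv, hmarg⟩ := (mem_Kset_iff μ₁ μ₂ w.1).mp w.2.1
    obtain ⟨hpos', hinv', hmarg'⟩ := (mem_Kset_iff μ₁ μ₂ w'.1).mp w'.2.1
    refine Subtype.ext (eq_of_indep_support hinv hinv' (hmarg.trans hmarg'.symm) (T w)
      (hT2 w) (hT1 w) ?_)
    intro q hq
    rw [hTT]
    exact hT1 w' q hq
  calc E.ncard = Nat.card E := (Nat.card_coe_set_eq E).symm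
    _ ≤ Nat.card {t : Finset (Quotient (MulAction.orbitRel G (X × Y))) // t.card = k} :=
        Nat.card_le_card_of_injective f hinj
    _ = (Nat.card (Quotient (MulAction.orbitRel G (X × Y)))).choose k := by
        rw [Nat.card_eq_fintype_card, Fintype.card_subtype]
        have heq : Finset.univ.filter
            (fun t : Finset (Quotient (MulAction.orbitRel G (X × Y))) => t.card = k)
            = Finset.powersetCard k Finset.univ := by
          ext t
          simp [Finset.mem_powersetCard, Finset.subset_univ]
        rw [heq, Finset.card_powersetCard, Finset.card_univ, Nat.card_eq_fintype_card]

end Stmt16Aux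

theorem stmt_16 {G X Y : Type*} [Group G] [Finite G] [Fintype X] [Fintype Y]
    [MulAction G X] [MulAction G Y] [Nonempty X] [Nonempty Y]
    (μ₁ : X → ℝ) (μ₂ : Y → ℝ)
    (h₁pos : ∀ x, 0 < μ₁ x) (h₂pos : ∀ y, 0 < μ₂ y)
    (h₁sum : ∑ x, μ₁ x = 1) (h₂sum : ∑ y, μ₂ y = 1)
    (h₁inv : ∀ (g : G) (x : X), μ₁ (g • x) = μ₁ x)
    (h₂inv : ∀ (g : G) (y : Y), μ₂ (g • y) = μ₂ y) :
    (Set.extremePoints ℝ (Kset G μ₁ μ₂)).ncard ≤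
      (Nat.card (Quotient (MulAction.orbitRel G (X × Y)))).choose
        (Nat.card (Quotient (MulAction.orbitRel G X)) +
          Nat.card (Quotient (MulAction.orbitRel G Y)) - 1) := by
  exact Stmt16Aux.main μ₁ μ₂
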